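/- For every integer N ≥ 1, every k with 0 ≤ k ≤ N, and every j ∈ {0, 1, ..., N}, the vector 𝐩(j) = (K_0(j), K_1(j), ..., K_N(j))ᵀ is an eigenvector of J_k with eigenvalue K_k(j): J_k · 𝐩(j) = K_k(j) · 𝐩(j). -/

import Mathlib

/-- The transition matrix `J_k` of the `k`-ball Ehrenfest model. -/
noncomputable def kBall (N k : ℕ) : Matrix (Fin (N + 1)) (Fin (N + 1)) ℝ :=
  fun i j =>
    ∑ ℓ ∈ Finset.range (k + 1),
      if (j : ℤ) = (i : ℤ) - (k : ℤ) + 2 * (ℓ : ℤ) then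
        (((i : ℕ).choose (k - ℓ) * (N - (i : ℕ)).choose ℓ : ℕ) : ℝ) / (N.choose k : ℝ)
      else 0

namespace KBallAux

open Finset
open scoped symmDiff

/-- Character sum over `m`-subsets of the hypercube coordinates. -/
noncomputable def g (N : ℕ) (S : Finset (Fin N)) (m : ℕ) : ℝ :=
  ∑ T ∈ powersetCard m (univ : Finset (Fin N)), (-1 : ℝ) ^ (S ∩ T).card

/-- Linearization coefficients. -/
def cnt (N k i w : ℕ) : ℕ :=
  ∑ ℓ ∈ range (k + 1), if i + 2 * ℓ = k + w then w.choose ℓ * (N - w).choose (k - ℓ) else 0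

variable {N : ℕ}

lemma mem_ex {k i : ℕ} {W T U : Finset (Fin N)} (hT : T.card = k) (hU : U.card = i)
    (hW : T ∆ U = W) : (T ∩ W).card ≤ k ∧ i + 2 * (T ∩ W).card = k + W.card := by
  subst hW
  have h1 : T ∩ (T ∆ U) = T \ U := by
    ext x; simp [Finset.mem_symmDiff]; tauto
  have h3 : T ∆ U = (T \ U) ∪ (U \ T) := by
    ext x; simp [Finset.mem_symmDiff]
  have hd : Disjoint (T \ U) (U \ T) := by
    simp only [Finset.disjoint_left, Finset.mem_sdiff]; tauto
  have hcW : (T ∆ U).card = (T \ U).card + (U \ T).card := by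
    rw [h3, card_union_of_disjoint hd]
  have e1 : (T \ U).card + (T ∩ U).card = T.card := card_sdiff_add_card_inter T U
  have e2 : (U \ T).card + (U ∩ T).card = U.card := card_sdiff_add_card_inter U T
  have e3 : (U ∩ T).card = (T ∩ U).card := by rw [inter_comm]
  rw [h1]
  omega

/-- Counting pairs `(T,U)` with `|T| = k`, `|U| = i` and `T ∆ U = W`. -/
lemma fiber_card (k i : ℕ) (W : Finset (Fin N)) :
    (((powersetCard k (univ : Finset (Fin N))) ×ˢ (powersetCard i (univ : Finset (Fin N)))).filter
      (fun p => p.1 ∆ p.2 = W)).card = cnt N k i W.card := by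
  by_cases h : ∃ ℓ, ℓ ≤ k ∧ i + 2 * ℓ = k + W.card
  · obtain ⟨ℓ, hℓk, hbal⟩ := h
    have hcard : (((powersetCard k (univ : Finset (Fin N))) ×ˢ
        (powersetCard i (univ : Finset (Fin N)))).filter (fun p => p.1 ∆ p.2 = W)).card
        = ((powersetCard ℓ W) ×ˢ (powersetCard (k - ℓ) Wᶜ)).card := by
      apply Finset.card_bij' (fun p _ => (p.1 ∩ W, p.1 \ W))
        (fun q _ => (q.1 ∪ q.2, (W \ q.1) ∪ q.2))
      · -- forward maps into target
        intro p hp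
        simp only [Finset.mem_filter, Finset.mem_product, Finset.mem_powersetCard] at hp
        obtain ⟨⟨⟨-, hT⟩, -, hU⟩, hW⟩ := hp
        obtain ⟨hle, hbal'⟩ := mem_ex hT hU hW
        have hTW : (p.1 ∩ W).card = ℓ := by omega
        have hTW2 : (p.1 ∩ W).card + (p.1 \ W).card = k := by
          rw [add_comm, card_sdiff_add_card_inter, hT]
        simp only [Finset.mem_product, Finset.mem_powersetCard]
        refine ⟨⟨inter_subset_right, hTW⟩, ?_, by omega⟩
        intro x hx
        simp only [Finset.mem_sdiff] at hx
        simp [hx.2]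
      · -- backward maps into source
        intro q hq
        simp only [Finset.mem_product, Finset.mem_powersetCard] at hq
        obtain ⟨⟨hA, hAc⟩, hB, hBc⟩ := hq
        have hAW : ∀ x ∈ q.1, x ∈ W := fun x hx => hA hx
        have hBW : ∀ x ∈ q.2, x ∉ W := by
          intro x hx; have := hB hx; simpa using this
        have hdisj : Disjoint q.1 q.2 := by
          simp only [Finset.disjoint_left]; intro x h1 h2
          exact hBW x h2 (hAW x h1)
        have hAcard : q.1.card ≤ W.card := card_le_card hA
        simp only [Finset.mem_filter, Finset.mem_product, Finset.mem_powersetCard]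
        refine ⟨⟨⟨subset_univ _, ?_⟩, subset_univ _, ?_⟩, ?_⟩
        · rw [card_union_of_disjoint hdisj]; omega
        · have hdisj2 : Disjoint (W \ q.1) q.2 := by
            simp only [Finset.disjoint_left, Finset.mem_sdiff]
            intro x h1 h2; exact hBW x h2 h1.1
          rw [card_union_of_disjoint hdisj2, card_sdiff_of_subset hA]; omega
        · ext x
          simp only [Finset.mem_symmDiff, Finset.mem_union, Finset.mem_sdiff]
          by_cases hx1 : x ∈ q.1 <;> by_cases hx2 : x ∈ q.2 <;>
            [skip; skip; skip; skip] <;>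
            first
            | (exfalso; exact hBW x hx2 (hAW x hx1))
            | (simp only [hx1, hx2]; tauto)
      · -- left inverse
        intro p hp
        simp only [Finset.mem_filter, Finset.mem_product, Finset.mem_powersetCard] at hp
        obtain ⟨⟨⟨-, hT⟩, -, hU⟩, hW⟩ := hp
        have h1 : (p.1 ∩ W) ∪ (p.1 \ W) = p.1 := by
          ext x; simp only [Finset.mem_union, Finset.mem_inter, Finset.mem_sdiff]; tauto
        have h2 : (W \ (p.1 ∩ W)) ∪ (p.1 \ W) = p.2 := by
          ext x
          subst hW
          simp only [Finset.mem_union, Finset.mem_sdiff, Finset.mem_inter,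
            Finset.mem_symmDiff]
          tauto
        exact Prod.ext h1 h2
      · -- right inverse
        intro q hq
        simp only [Finset.mem_product, Finset.mem_powersetCard] at hq
        obtain ⟨⟨hA, -⟩, hB, -⟩ := hq
        have hAW : ∀ x ∈ q.1, x ∈ W := fun x hx => hA hx
        have hBW : ∀ x ∈ q.2, x ∉ W := by
          intro x hx; have := hB hx; simpa using this
        have h1 : (q.1 ∪ q.2) ∩ W = q.1 := by
          ext x; simp only [Finset.mem_inter, Finset.mem_union]
          constructor
          · rintro ⟨h1 | h1, h2⟩
            · exact h1
            · exact absurd h2 (hBW x h1)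
          · intro h; exact ⟨Or.inl h, hAW x h⟩
        have h2 : (q.1 ∪ q.2) \ W = q.2 := by
          ext x; simp only [Finset.mem_sdiff, Finset.mem_union]
          constructor
          · rintro ⟨h1 | h1, h2⟩
            · exact absurd (hAW x h1) h2
            · exact h1
          · intro h; exact ⟨Or.inr h, hBW x h⟩
        exact Prod.ext h1 h2
    rw [hcard, card_product, card_powersetCard, card_powersetCard, card_compl,
      Fintype.card_fin, cnt]
    rw [Finset.sum_eq_single_of_mem ℓ (mem_range.mpr (by omega))]
    · rw [if_pos hbal]
    · intro b _ hb
      rw [if_neg]; omega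
  · push_neg at h
    rw [Finset.filter_eq_empty_iff.mpr, card_empty, cnt]
    · symm; apply Finset.sum_eq_zero
      intro ℓ hℓ
      rw [if_neg]
      exact h ℓ (by simpa using Nat.lt_succ_iff.mp (mem_range.mp hℓ))
    · intro p hp
      simp only [Finset.mem_product, Finset.mem_powersetCard] at hp
      obtain ⟨⟨-, hT⟩, -, hU⟩ := hp
      intro hW
      obtain ⟨hle, hbal'⟩ := mem_ex hT hU hW
      exact h _ hle hbal'

lemma sign_symmDiff (S T U : Finset (Fin N)) :
    (-1 : ℝ) ^ (S ∩ (T ∆ U)).card = (-1) ^ (S ∩ T).card * (-1) ^ (S ∩ U).card := by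
  have h1 : S ∩ (T ∆ U) = (S ∩ T) ∆ (S ∩ U) := by
    ext x; simp [Finset.mem_symmDiff]; tauto
  set A := S ∩ T
  set B := S ∩ U
  have h3 : A ∆ B = (A ∪ B) \ (A ∩ B) := symmDiff_eq_sup_sdiff_inf A B
  have hsub : A ∩ B ⊆ A ∪ B := inter_subset_left.trans subset_union_left
  have h4 : (A ∆ B).card + (A ∩ B).card = (A ∪ B).card := by
    have h5 := card_sdiff_add_card_inter (A ∪ B) (A ∩ B)
    rw [Finset.inter_eq_right.mpr hsub] at h5
    rw [h3]
    exact h5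
  have h5 : (A ∪ B).card + (A ∩ B).card = A.card + B.card := card_union_add_card_inter A B
  have h6 : (A ∆ B).card + 2 * (A ∩ B).card = A.card + B.card := by omega
  rw [h1, ← pow_add, ← h6, pow_add, pow_mul]
  norm_num

/-- The linearization identity. -/
lemma g_mul_g (S : Finset (Fin N)) (k i : ℕ) :
    g N S k * g N S i = ∑ w ∈ range (N + 1), (cnt N k i w : ℝ) * g N S w := by
  classical
  have step1 : g N S k * g N S i
      = ∑ p ∈ (powersetCard k (univ : Finset (Fin N))) ×ˢ
          (powersetCard i (univ : Finset (Fin N))), (-1 : ℝ) ^ (S ∩ (p.1 ∆ p.2)).card := by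
    rw [g, g, sum_mul_sum, Finset.sum_product]
    exact Finset.sum_congr rfl fun T _ => Finset.sum_congr rfl fun U _ =>
      (sign_symmDiff S T U).symm
  have fib := Finset.sum_fiberwise_of_maps_to'
    (s := (powersetCard k (univ : Finset (Fin N))) ×ˢ (powersetCard i (univ : Finset (Fin N))))
    (t := (univ : Finset (Fin N)).powerset) (g := fun p => p.1 ∆ p.2)
    (fun p _ => mem_powerset.mpr (subset_univ _))
    (fun W => (-1 : ℝ) ^ (S ∩ W).card)
  rw [step1, ← fib]
  have step2 : ∀ W : Finset (Fin N),
      (∑ p ∈ ((powersetCard k (univ : Finset (Fin N))) ×ˢ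
          (powersetCard i (univ : Finset (Fin N)))).filter (fun p => p.1 ∆ p.2 = W),
        (-1 : ℝ) ^ (S ∩ W).card) = (cnt N k i W.card : ℝ) * (-1 : ℝ) ^ (S ∩ W).card := by
    intro W
    rw [Finset.sum_const, fiber_card, nsmul_eq_mul]
  rw [Finset.sum_congr rfl fun W _ => step2 W]
  rw [powerset_card_disjiUnion]
  erw [Finset.sum_disjiUnion]
  rw [card_univ, Fintype.card_fin]
  apply Finset.sum_congr rfl
  intro w _
  rw [g, Finset.mul_sum]
  apply Finset.sum_congr rfl
  intro W hW
  rw [(mem_powersetCard.mp hW).2]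

lemma g_zero (S : Finset (Fin N)) : g N S 0 = 1 := by
  simp [g]

lemma g_one (S : Finset (Fin N)) : g N S 1 = (N : ℝ) - 2 * S.card := by
  rw [g, powersetCard_one, Finset.sum_map]
  have : ∀ a : Fin N, (-1 : ℝ) ^ (S ∩ ({a} : Finset (Fin N))).card
      = if a ∈ S then (-1 : ℝ) else 1 := by
    intro a
    by_cases h : a ∈ S
    · rw [if_pos h, inter_singleton_of_mem h, card_singleton, pow_one]
    · rw [if_neg h, inter_singleton_of_notMem h, card_empty, pow_zero]
  simp only [Function.Embedding.coeFn_mk, this]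
  rw [← Finset.sum_add_sum_compl S]
  rw [Finset.sum_congr rfl (fun a ha => if_pos ha),
    Finset.sum_congr rfl (fun a (ha : a ∈ Sᶜ) => if_neg (by simpa using ha)),
    Finset.sum_const, Finset.sum_const, card_compl, Fintype.card_fin]
  have : S.card ≤ N := by simpa using card_le_card (subset_univ S)
  simp only [nsmul_eq_mul, mul_one, mul_neg_one]
  rw [Nat.cast_sub this]
  ring

/-- The triple binomial coefficient identity. -/
lemma L3 {i k ℓ : ℕ} (hi : i ≤ N) (hℓ : ℓ ≤ k) (h1 : k ≤ i + 2 * ℓ) (h2 : i + 2 * ℓ ≤ N + k) :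
    i.choose (k - ℓ) * (N - i).choose ℓ * N.choose i
      = (i + 2 * ℓ - k).choose ℓ * (N - (i + 2 * ℓ - k)).choose (k - ℓ)
        * N.choose (i + 2 * ℓ - k) := by
  set w := i + 2 * ℓ - k with hw
  by_cases hki : k - ℓ ≤ i
  · by_cases hNi : ℓ ≤ N - i
    · -- main case
      have hw1 : ℓ ≤ w := by omega
      have hw2 : k - ℓ ≤ N - w := by omega
      have hw3 : w ≤ N := by omega
      have e1 : w - ℓ = i - (k - ℓ) := by omega
      have e2 : N - w - (k - ℓ) = N - i - ℓ := by omega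
      have : (↑(i.choose (k - ℓ) * (N - i).choose ℓ * N.choose i) : ℚ)
          = (↑(w.choose ℓ * (N - w).choose (k - ℓ) * N.choose w) : ℚ) := by
        push_cast
        rw [Nat.cast_choose ℚ hki, Nat.cast_choose ℚ hNi, Nat.cast_choose ℚ hi,
          Nat.cast_choose ℚ hw1, Nat.cast_choose ℚ hw2, Nat.cast_choose ℚ hw3, e1, e2]
        have f1 : ((k - ℓ).factorial : ℚ) ≠ 0 := Nat.cast_ne_zero.mpr (Nat.factorial_ne_zero _)
        have f2 : ((i - (k - ℓ)).factorial : ℚ) ≠ 0 := Nat.cast_ne_zero.mpr (Nat.factorial_ne_zero _)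
        have f3 : (ℓ.factorial : ℚ) ≠ 0 := Nat.cast_ne_zero.mpr (Nat.factorial_ne_zero _)
        have f4 : ((N - i - ℓ).factorial : ℚ) ≠ 0 := Nat.cast_ne_zero.mpr (Nat.factorial_ne_zero _)
        have f5 : (i.factorial : ℚ) ≠ 0 := Nat.cast_ne_zero.mpr (Nat.factorial_ne_zero _)
        have f6 : ((N - i).factorial : ℚ) ≠ 0 := Nat.cast_ne_zero.mpr (Nat.factorial_ne_zero _)
        have f7 : (w.factorial : ℚ) ≠ 0 := Nat.cast_ne_zero.mpr (Nat.factorial_ne_zero _)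
        have f8 : ((N - w).factorial : ℚ) ≠ 0 := Nat.cast_ne_zero.mpr (Nat.factorial_ne_zero _)
        field_simp
      exact_mod_cast this
    · -- ℓ > N - i : both sides zero
      have z1 : (N - i).choose ℓ = 0 := Nat.choose_eq_zero_of_lt (by omega)
      have z2 : (N - w).choose (k - ℓ) = 0 := Nat.choose_eq_zero_of_lt (by omega)
      rw [z1, z2]; ring
  · -- k - ℓ > i : both sides zero
    have z1 : i.choose (k - ℓ) = 0 := Nat.choose_eq_zero_of_lt (by omega)
    have z2 : w.choose ℓ = 0 := Nat.choose_eq_zero_of_lt (by omega)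
    rw [z1, z2]; ring

end KBallAux

namespace Part2
open Finset KBallAux
open scoped symmDiff

noncomputable def vv (N : ℕ) (S : Finset (Fin N)) (m : ℕ) : ℝ :=
  KBallAux.g N S m / (N.choose m : ℝ)

lemma cntR (N k i w : ℕ) : (cnt N k i w : ℝ)
    = ∑ ℓ ∈ range (k + 1), if i + 2 * ℓ = k + w then
        ((w.choose ℓ * (N - w).choose (k - ℓ) : ℕ) : ℝ) else 0 := by
  rw [cnt]
  push_cast
  rfl

lemma sum_range_pick (n a k : ℕ) (f : ℕ → ℝ) :
    (∑ w ∈ range (n + 1), if a = k + w then f w else 0)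
      = if k ≤ a ∧ a ≤ n + k then f (a - k) else 0 := by
  by_cases h : k ≤ a ∧ a ≤ n + k
  · rw [if_pos h, Finset.sum_eq_single_of_mem (a - k) (mem_range.mpr (by omega))]
    · rw [if_pos (by omega)]
    · intro b _ hb; rw [if_neg (by omega)]
  · rw [if_neg h]
    apply Finset.sum_eq_zero
    intro w hw
    have := mem_range.mp hw
    rw [if_neg (by omega)]

lemma row_id {N : ℕ} (S : Finset (Fin N)) {k i : ℕ} (hk : k ≤ N) (hi : i ≤ N) :
    (∑ ℓ ∈ range (k + 1),
      if k ≤ i + 2 * ℓ ∧ i + 2 * ℓ ≤ N + k then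
        ((i.choose (k - ℓ) * (N - i).choose ℓ : ℕ) : ℝ) / (N.choose k : ℝ)
          * vv N S (i + 2 * ℓ - k)
      else 0)
    = vv N S k * vv N S i := by
  have hck : (N.choose k : ℝ) ≠ 0 := Nat.cast_ne_zero.mpr (Nat.choose_pos hk).ne'
  have hci : (N.choose i : ℝ) ≠ 0 := Nat.cast_ne_zero.mpr (Nat.choose_pos hi).ne'
  have A : vv N S k * vv N S i
      = ∑ w ∈ range (N + 1), (cnt N k i w : ℝ) * KBallAux.g N S w
          / ((N.choose k : ℝ) * (N.choose i : ℝ)) := by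
    rw [vv, vv, div_mul_div_comm, g_mul_g, Finset.sum_div]
  rw [A]
  have B : ∀ w ∈ range (N + 1), (cnt N k i w : ℝ) * KBallAux.g N S w
        / ((N.choose k : ℝ) * (N.choose i : ℝ))
      = ∑ ℓ ∈ range (k + 1), if i + 2 * ℓ = k + w then
          ((w.choose ℓ * (N - w).choose (k - ℓ) : ℕ) : ℝ) * KBallAux.g N S w
            / ((N.choose k : ℝ) * (N.choose i : ℝ)) else 0 := by
    intro w _
    rw [cntR, Finset.sum_mul, Finset.sum_div]
    apply Finset.sum_congr rfl
    intro ℓ _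
    split <;> simp
  rw [Finset.sum_congr rfl B, Finset.sum_comm]
  apply Finset.sum_congr rfl
  intro ℓ hℓ
  have hℓk : ℓ ≤ k := by have := mem_range.mp hℓ; omega
  rw [sum_range_pick N (i + 2 * ℓ) k
    (fun w => ((w.choose ℓ * (N - w).choose (k - ℓ) : ℕ) : ℝ) * KBallAux.g N S w
      / ((N.choose k : ℝ) * (N.choose i : ℝ)))]
  by_cases h : k ≤ i + 2 * ℓ ∧ i + 2 * ℓ ≤ N + k
  · rw [if_pos h, if_pos h]
    set w := i + 2 * ℓ - k with hw
    have hwN : w ≤ N := by omega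
    have hcw : (N.choose w : ℝ) ≠ 0 := Nat.cast_ne_zero.mpr (Nat.choose_pos hwN).ne'
    have h3 := L3 (N := N) hi hℓk h.1 h.2
    have h3R : ((i.choose (k - ℓ) * (N - i).choose ℓ : ℕ) : ℝ) * (N.choose i : ℝ)
        = ((w.choose ℓ * (N - w).choose (k - ℓ) : ℕ) : ℝ) * (N.choose w : ℝ) := by
      rw [← hw] at h3
      exact_mod_cast congrArg (Nat.cast : ℕ → ℝ) h3
    rw [vv]
    field_simp
    push_cast at h3R ⊢
    linear_combination KBallAux.g N S w * h3R
  · rw [if_neg h, if_neg h]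
end Part2

namespace Part3
open Finset KBallAux Part2

lemma sum_fin_pick {n : ℕ} (ii k ℓ : ℕ) (f : ℕ → ℝ) :
    (∑ x : Fin (n + 1), if (x : ℤ) = (ii : ℤ) - (k : ℤ) + 2 * (ℓ : ℤ) then f (x : ℕ) else 0)
      = if k ≤ ii + 2 * ℓ ∧ ii + 2 * ℓ ≤ n + k then f (ii + 2 * ℓ - k) else 0 := by
  by_cases h : k ≤ ii + 2 * ℓ ∧ ii + 2 * ℓ ≤ n + k
  · rw [if_pos h]
    rw [Finset.sum_eq_single_of_mem (⟨ii + 2 * ℓ - k, by omega⟩ : Fin (n + 1)) (mem_univ _)]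
    · rw [if_pos (by show ((ii + 2 * ℓ - k : ℕ) : ℤ) = _; omega)]
    · intro b _ hb
      rw [if_neg]
      intro hc
      apply hb
      apply Fin.ext
      simp only [Fin.val_mk]
      omega
  · rw [if_neg h]
    apply Finset.sum_eq_zero
    intro x _
    rw [if_neg]
    intro hc
    have hx := x.isLt
    omega

end Part3

/-- for `0 ≤ k ≤ N` and `j ∈ {0,…,N}`, the vector
`𝐩(j) = (K_0(j),…,K_N(j))ᵀ` is an eigenvector of `J_k` with eigenvalue `K_k(j)`. -/
theorem kBall_krawtchouk_eigenvector (N : ℕ) (hN : 1 ≤ N)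
    (K : ℕ → Polynomial ℝ) (hK0 : K 0 = 1)
    (hKrec : ∀ j < N,
      -(Polynomial.X * K j) =
        Polynomial.C (((N : ℝ) - (j : ℕ)) / 2) * K (j + 1)
          - Polynomial.C ((N : ℝ) / 2) * K j
          + Polynomial.C ((j : ℝ) / 2) * K (j - 1))
    (k j : ℕ) (hk : k ≤ N) (hj : j ≤ N) :
    (kBall N k).mulVec (fun i : Fin (N + 1) => (K (i : ℕ)).eval (j : ℝ))
      = ((K k).eval (j : ℝ)) • (fun i : Fin (N + 1) => (K (i : ℕ)).eval (j : ℝ)) := by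
  classical
  open Finset KBallAux Part2 Part3 in
  obtain ⟨S, -, hScard⟩ := Finset.exists_subset_card_eq (s := (Finset.univ : Finset (Fin N))) (n := j)
    (by simpa using hj)
  have hNne : (N : ℝ) ≠ 0 := Nat.cast_ne_zero.mpr (by omega)
  have hvv0 : vv N S 0 = 1 := by simp [vv, g_zero]
  have hvv1 : vv N S 1 = ((N : ℝ) - 2 * (j : ℝ)) / N := by
    rw [vv, g_one, hScard, Nat.choose_one_right]
  -- the recurrence satisfied by vv
  have hrec_v : ∀ i : ℕ, 1 ≤ i → i + 1 ≤ N →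
      ((i : ℝ) / N) * vv N S (i - 1) + (((N : ℝ) - i) / N) * vv N S (i + 1)
        = vv N S 1 * vv N S i := by
    intro i h1 h2
    have hr := row_id S (k := 1) (i := i) hN (by omega)
    rw [Finset.sum_range_succ, Finset.sum_range_one] at hr
    rw [if_pos (by omega), if_pos (by omega)] at hr
    have e1 : i + 2 * 0 - 1 = i - 1 := by omega
    have e2 : i + 2 * 1 - 1 = i + 1 := by omega
    rw [e1, e2] at hr
    simp only [Nat.sub_zero, Nat.sub_self, Nat.choose_zero_right, Nat.choose_one_right] at hr
    push_cast [Nat.cast_sub (by omega : i ≤ N)] at hr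
    linear_combination hr
  -- identify K values with vv
  have hKv : ∀ i, i ≤ N → (K i).eval (j : ℝ) = vv N S i := by
    intro i
    induction i using Nat.strong_induction_on with
    | _ i ih =>
      obtain _ | (_ | m) := i
      · intro _
        simp [hK0, hvv0]
      · intro _
        have h0 := congrArg (Polynomial.eval (j : ℝ)) (hKrec 0 (by omega))
        simp [hK0] at h0
        rw [hvv1]
        field_simp at h0 ⊢
        linarith
      · intro hi
        have hm1 := ih (m + 1) (by omega) (by omega)
        have hm0 := ih m (by omega) (by omega)
        have hrecK := congrArg (Polynomial.eval (j : ℝ)) (hKrec (m + 1) (by omega))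
        simp only [Polynomial.eval_neg, Polynomial.eval_mul, Polynomial.eval_X,
          Polynomial.eval_add, Polynomial.eval_sub, Polynomial.eval_C,
          Nat.add_sub_cancel] at hrecK
        rw [hm1, hm0] at hrecK
        have hv := hrec_v (m + 1) (by omega) (by omega)
        rw [hvv1] at hv
        simp only [Nat.add_sub_cancel] at hv
        have hNm : ((N : ℝ) - (m + 1)) ≠ 0 := by
          have : (m + 1 : ℝ) < N := by exact_mod_cast (by omega : m + 1 < N)
          linarith
        apply mul_left_cancel₀ hNm
        have hcast : ((m + 1 : ℕ) : ℝ) = (m : ℝ) + 1 := by push_cast; ring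
        rw [hcast] at hrecK
        field_simp at hv
        push_cast at hrecK hv ⊢
        linarith
  -- main computation
  funext i
  have hik : (i : ℕ) ≤ N := by omega
  have lhs_eq : (kBall N k).mulVec (fun i : Fin (N + 1) => (K (i : ℕ)).eval (j : ℝ)) i
      = ∑ x : Fin (N + 1), kBall N k i x * vv N S (x : ℕ) := by
    simp only [Matrix.mulVec, dotProduct]
    exact Finset.sum_congr rfl fun x _ => by rw [hKv (x : ℕ) (by omega)]
  rw [lhs_eq]
  have rhs_eq : (((K k).eval (j : ℝ)) • (fun i : Fin (N + 1) => (K (i : ℕ)).eval (j : ℝ))) i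
      = vv N S k * vv N S (i : ℕ) := by
    simp only [Pi.smul_apply, smul_eq_mul]
    rw [hKv k hk, hKv (i : ℕ) hik]
  rw [rhs_eq, ← row_id S hk hik]
  unfold kBall
  simp only [Finset.sum_mul]
  rw [Finset.sum_comm]
  apply Finset.sum_congr rfl
  intro ℓ _
  simp only [ite_mul, zero_mul]
  rw [sum_fin_pick (n := N) (i : ℕ) k ℓ
    (fun m => ((((i : ℕ)).choose (k - ℓ) * (N - (i : ℕ)).choose ℓ : ℕ) : ℝ)
      / (N.choose k : ℝ) * vv N S m)]
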